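/- Let A be a real symmetric matrix in S(P_4) for the path P_4 on vertices 1-2-3-4 (so a_{12}, a_{23}, a_{34} ≠ 0, and a_{13} = a_{14} = a_{24} = 0). Then A has the Strong Arnold Property. -/
import Mathlib


def HasSAP {n : ℕ} (A : Matrix (Fin n) (Fin n) ℝ) : Prop :=
  ∀ X : Matrix (Fin n) (Fin n) ℝ, X.IsSymm → (∀ i, X i i = 0) →
    (∀ i j, i ≠ j → A i j ≠ 0 → X i j = 0) → A * X = 0 → X = 0

theorem stmt_5 (A : Matrix (Fin 4) (Fin 4) ℝ) (hsymm : A.IsSymm)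
    (h12 : A 0 1 ≠ 0) (h23 : A 1 2 ≠ 0) (h34 : A 2 3 ≠ 0)
    (h13 : A 0 2 = 0) (h14 : A 0 3 = 0) (h24 : A 1 3 = 0) : HasSAP A := by
  intro X hX hd he hAX
  have hXs : ∀ i j, X j i = X i j := fun i j => by
    have := congrFun (congrFun hX i) j
    simpa [Matrix.transpose_apply] using this
  have hAs : ∀ i j, A j i = A i j := fun i j => by
    have := congrFun (congrFun hsymm i) j
    simpa [Matrix.transpose_apply] using this
  have e01 : X 0 1 = 0 := he 0 1 (by decide) h12
  have e12 : X 1 2 = 0 := he 1 2 (by decide) h23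
  have e23 : X 2 3 = 0 := he 2 3 (by decide) h34
  have m : ∀ i j, (A * X) i j = 0 := fun i j => congrFun (congrFun hAX i) j
  have a10 : A 1 0 = A 0 1 := hAs 0 1
  have a20 : A 2 0 = 0 := (hAs 0 2).trans h13
  have a21 : A 2 1 = A 1 2 := hAs 1 2
  have h1 := m 1 2
  rw [Matrix.mul_apply, Fin.sum_univ_four] at h1
  have p0 : X 0 2 = 0 := by
    rw [e12, hd 2, h24, a10] at h1
    have : A 0 1 * X 0 2 = 0 := by linarith
    exact (mul_eq_zero.mp this).resolve_left h12
  have h2 := m 2 3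
  rw [Matrix.mul_apply, Fin.sum_univ_four] at h2
  have r0 : X 1 3 = 0 := by
    rw [a20, e23, hd 3, a21] at h2
    have : A 1 2 * X 1 3 = 0 := by linarith
    exact (mul_eq_zero.mp this).resolve_left h23
  have h3 := m 1 3
  rw [Matrix.mul_apply, Fin.sum_univ_four] at h3
  have q0 : X 0 3 = 0 := by
    rw [r0, e23, hd 3, h24, a10] at h3
    have : A 0 1 * X 0 3 = 0 := by linarith
    exact (mul_eq_zero.mp this).resolve_left h12
  ext i j
  fin_cases i <;> fin_cases j <;>
    simp_all [hXs 0 1, hXs 0 2, hXs 0 3, hXs 1 2, hXs 1 3, hXs 2 3, hd 0, hd 1, hd 2, hd 3]
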